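/- Let R be a noetherian commutative ring, M an R-module, and t a nilpotent R-linear endomorphism of M. Then M is finitely generated as an R-module if and only if the kernel of t is finitely generated. -/

import Mathlib

/-- Over a noetherian ring, a submodule contained in a finitely generated submodule is
finitely generated. -/
lemma fg_of_le_fg {R : Type*} [CommRing R] [IsNoetherianRing R]
    {M : Type*} [AddCommGroup M] [Module R M]
    {N P : Submodule R M} (hN : N.FG) (hPN : P ≤ N) : P.FG := by
  have : Module.Finite R N := Module.Finite.iff_fg.mpr hN
  have hno : IsNoetherian R N := isNoetherian_of_isNoetherianRing_of_finite R N
  have h1 : (P.comap N.subtype).FG := IsNoetherian.noetherian _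
  have h2 : ((P.comap N.subtype).map N.subtype).FG := h1.map _
  have : (P.comap N.subtype).map N.subtype = P := by
    rw [Submodule.map_comap_eq, Submodule.range_subtype, inf_eq_right.mpr hPN]
  rwa [this] at h2

/-- Let `R` be a noetherian commutative ring, `M` an `R`-module, and `t` a nilpotent
`R`-linear endomorphism of `M`. Then `M` is finitely generated as an `R`-module if and
only if the kernel of `t` is finitely generated. -/
theorem stmt0 {R : Type*} [CommRing R] [IsNoetherianRing R]
    {M : Type*} [AddCommGroup M] [Module R M]
    (t : M →ₗ[R] M) (ht : IsNilpotent t) :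
    Module.Finite R M ↔ Module.Finite R (LinearMap.ker t) := by
  constructor
  · intro h
    have : IsNoetherian R M := isNoetherian_of_isNoetherianRing_of_finite R M
    exact Module.Finite.iff_fg.mpr (IsNoetherian.noetherian _)
  · intro h
    obtain ⟨r, hr⟩ := ht
    have hker : (LinearMap.ker t).FG := Module.Finite.iff_fg.mp h
    have key : ∀ k : ℕ, (LinearMap.ker (t ^ k)).FG := by
      intro k
      induction k with
      | zero =>
        simpa [Module.End.one_eq_id] using Submodule.fg_bot
      | succ k ih =>
        apply Submodule.fg_of_fg_map_of_fg_inf_ker t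
        · apply fg_of_le_fg ih
          rintro x ⟨y, hy, rfl⟩
          simp only [LinearMap.mem_ker] at hy ⊢
          have : (t ^ k) (t y) = (t ^ (k + 1)) y := by
            rw [pow_succ]; simp [Module.End.mul_apply]
          rw [this]; exact hy
        · exact fg_of_le_fg hker inf_le_right
    have : LinearMap.ker (t ^ r) = ⊤ := by rw [hr]; exact LinearMap.ker_zero
    have hK := key r
    rw [this] at hK
    exact Module.finite_def.mpr hK
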